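/- arXiv:2506.17002 — 7 statements merged into one kernel-verified Lean document; each statement's English description precedes it below -/
import Mathlib

section
/- Let k > 0 and let X, Y : ℝ → ℝ be continuous functions such that X is odd, Y is even, and for all x one has X(x + 2π) = X(x) + 2π/k and Y(x + 2π) = Y(x). If the curve x ↦ (X(x), Y(x)) self-intersects, i.e., there exist real numbers a ≠ b with X(a) = X(b) and Y(a) = Y(b), then there exist α, β ∈ [0, 4π] with α ≠ β such that X(α) = X(β) and Y(α) = Y(β). -/
open Real

/-- Any self-intersection of the periodic symmetric interface curve
`x ↦ (X x, Y x)` is witnessed by two distinct parameters in `[0, 4π]`. -/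
theorem self_intersection_in_window
    (k : ℝ) (hk : 0 < k) (X Y : ℝ → ℝ)
    (hXcont : Continuous X) (hYcont : Continuous Y)
    (hXodd : ∀ x, X (-x) = -X x) (hYeven : ∀ x, Y (-x) = Y x)
    (hXper : ∀ x, X (x + 2 * π) = X x + 2 * π / k)
    (hYper : ∀ x, Y (x + 2 * π) = Y x)
    (a b : ℝ) (hab : a ≠ b) (hXab : X a = X b) (hYab : Y a = Y b) :
    ∃ α β : ℝ, α ∈ Set.Icc (0 : ℝ) (4 * π) ∧ β ∈ Set.Icc (0 : ℝ) (4 * π) ∧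
      α ≠ β ∧ X α = X β ∧ Y α = Y β := by
  by_contra hcon
  push_neg at hcon
  have hπ : 0 < π := Real.pi_pos
  have hc : 0 < 2 * π / k := by positivity
  have hpair : ∀ α β : ℝ, 0 ≤ α → α ≤ 4*π → 0 ≤ β → β ≤ 4*π → α ≠ β →
      X α = X β → Y α = Y β → False := by
    intro α β h1 h2 h3 h4 h5 h6 h7
    exact hcon α β ⟨h1, h2⟩ ⟨h3, h4⟩ h5 h6 h7
  have hX0 : X 0 = 0 := by
    have h := hXodd 0
    rw [neg_zero] at h
    linarith
  have hX2π : X (2*π) = 2*π/k := by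
    have h := hXper 0
    rw [hX0, zero_add] at h
    linarith
  -- shift lemmas
  have hXshift : ∀ (n : ℕ) (x : ℝ), X (x + 2*π*n) = X x + n * (2*π/k) := by
    intro n
    induction n with
    | zero => intro x; simp
    | succ n ih =>
      intro x
      have e : x + 2*π*((n:ℝ)+1) = (x + 2*π*n) + 2*π := by ring
      push_cast
      rw [e, hXper, ih]
      push_cast
      ring
  have hYshift : ∀ (n : ℕ) (x : ℝ), Y (x + 2*π*n) = Y x := by
    intro n
    induction n with
    | zero => intro x; simp
    | succ n ih =>
      intro x
      have e : x + 2*π*((n:ℝ)+1) = (x + 2*π*n) + 2*π := by ring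
      push_cast
      rw [e, hYper, ih]
  have hXshiftZ : ∀ (n : ℤ) (x : ℝ), X (x + 2*π*n) = X x + n * (2*π/k) := by
    intro n x
    obtain ⟨m, rfl | rfl⟩ := Int.eq_nat_or_neg n
    · push_cast
      exact hXshift m x
    · push_cast
      have h := hXshift m (x - 2*π*m)
      have e : x - 2*π*m + 2*π*m = x := by ring
      rw [e] at h
      have e2 : x + 2*π*(-(m:ℝ)) = x - 2*π*m := by ring
      rw [e2]
      linarith
  have hYshiftZ : ∀ (n : ℤ) (x : ℝ), Y (x + 2*π*n) = Y x := by
    intro n x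
    obtain ⟨m, rfl | rfl⟩ := Int.eq_nat_or_neg n
    · push_cast
      exact hYshift m x
    · push_cast
      have h := hYshift m (x - 2*π*m)
      have e : x - 2*π*m + 2*π*m = x := by ring
      rw [e] at h
      have e2 : x + 2*π*(-(m:ℝ)) = x - 2*π*m := by ring
      rw [e2]
      exact h.symm
  -- X has no zero on (0, 2π] (else symmetric pair around 2π)
  have hXne : ∀ t : ℝ, 0 < t → t ≤ 2*π → X t ≠ 0 := by
    intro t ht1 ht2 h0
    have hXa : X (2*π - t) = 2*π/k := by
      have h := hXper (-t)
      rw [hXodd, h0] at h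
      have e : -t + 2*π = 2*π - t := by ring
      rw [e] at h
      linarith
    have hXb : X (2*π + t) = 2*π/k := by
      have h := hXper t
      rw [h0] at h
      have e : t + 2*π = 2*π + t := by ring
      rw [e] at h
      linarith
    have hYa : Y (2*π - t) = Y t := by
      have h := hYper (-t)
      rw [hYeven] at h
      have e : -t + 2*π = 2*π - t := by ring
      rw [e] at h
      exact h
    have hYb : Y (2*π + t) = Y t := by
      have h := hYper t
      have e : t + 2*π = 2*π + t := by ring
      rw [e] at h
      exact h
    exact hpair (2*π - t) (2*π + t) (by linarith) (by linarith) (by linarith)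
      (by linarith) (by intro hh; linarith) (by rw [hXa, hXb]) (by rw [hYa, hYb])
  -- hence X > 0 on (0, 2π] by IVT
  have hXpos2 : ∀ t : ℝ, 0 < t → t ≤ 2*π → 0 < X t := by
    intro t ht1 ht2
    rcases lt_trichotomy (X t) 0 with h | h | h
    · exfalso
      have hsub := intermediate_value_Icc ht2 hXcont.continuousOn
      have h0mem : (0:ℝ) ∈ Set.Icc (X t) (X (2*π)) := by
        constructor
        · linarith
        · rw [hX2π]; linarith
      obtain ⟨s, hs, hsX⟩ := hsub h0mem
      exact hXne s (lt_of_lt_of_le ht1 hs.1) hs.2 hsX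
    · exact absurd h (hXne t ht1 ht2)
    · exact h
  -- X > 0 for all t > 0
  have hXposN : ∀ n : ℕ, ∀ t : ℝ, 0 < t → t ≤ 2*π*(n+1) → 0 < X t := by
    intro n
    induction n with
    | zero =>
      intro t ht1 ht2
      push_cast at ht2
      exact hXpos2 t ht1 (by linarith)
    | succ n ih =>
      intro t ht1 ht2
      have hn0 : (0:ℝ) ≤ (n:ℝ) := Nat.cast_nonneg n
      have hp2 : 2*π ≤ 2*π*((n:ℝ)+1) := by nlinarith
      by_cases hle : t ≤ 2*π*((n:ℝ)+1)
      · exact ih t ht1 hle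
      · push_neg at hle
        have h := hXper (t - 2*π)
        have e : t - 2*π + 2*π = t := by ring
        rw [e] at h
        have hpos : 0 < X (t - 2*π) := by
          apply ih (t - 2*π) (by linarith)
          push_cast at ht2
          linarith
        linarith
  have hbound : ∀ t : ℝ, 0 < t → ∃ n : ℕ, t ≤ 2*π*(n+1) := by
    intro t ht
    obtain ⟨n, hn⟩ := exists_nat_gt (t / (2*π))
    have h2 : (0:ℝ) < 2*π := by linarith
    rw [div_lt_iff₀ h2] at hn
    exact ⟨n, by nlinarith⟩
  have hXposAll : ∀ t : ℝ, 0 < t → 0 < X t := by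
    intro t ht
    obtain ⟨n, hn⟩ := hbound t ht
    exact hXposN n t ht hn
  -- no symmetric intersection around π
  have hFne : ∀ t : ℝ, 0 < t → t ≤ π → X (π + t) ≠ X (π - t) := by
    intro t ht1 ht2 heq
    have hYeq : Y (π - t) = Y (π + t) := by
      have h1 : Y (π - t) = Y (t - π) := by
        have h := hYeven (t - π)
        have e : -(t - π) = π - t := by ring
        rw [e] at h
        exact h
      have h2 : Y (t - π + 2*π) = Y (t - π) := hYper _
      have e : t - π + 2*π = π + t := by ring
      rw [e] at h2
      rw [h1, ← h2]
    exact hpair (π - t) (π + t) (by linarith) (by linarith) (by linarith) (by linarith)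
      (by intro hh; linarith) heq.symm hYeq
  -- F(t) = X(π+t) - X(π-t) > 0 on (0, π] by IVT
  have hFpos2 : ∀ t : ℝ, 0 < t → t ≤ π → X (π - t) < X (π + t) := by
    intro t ht1 ht2
    set f : ℝ → ℝ := fun s => X (π + s) - X (π - s) with hf
    have hfc : Continuous f := by
      apply Continuous.sub
      · exact hXcont.comp (continuous_const.add continuous_id)
      · exact hXcont.comp (continuous_const.sub continuous_id)
    have hfπ : f π = 2*π/k := by
      simp only [hf]
      have e1 : π + π = 2*π := by ring
      have e2 : π - π = 0 := by ring
      rw [e1, e2, hX2π, hX0]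
      ring
    rcases lt_trichotomy (f t) 0 with h | h | h
    · exfalso
      have hsub := intermediate_value_Icc ht2 hfc.continuousOn
      have h0mem : (0:ℝ) ∈ Set.Icc (f t) (f π) := ⟨le_of_lt h, by rw [hfπ]; linarith⟩
      obtain ⟨s, hs, hsf⟩ := hsub h0mem
      have heq : X (π + s) = X (π - s) := by
        simp only [hf] at hsf
        linarith
      exact hFne s (lt_of_lt_of_le ht1 hs.1) hs.2 heq
    · exfalso
      have heq : X (π + t) = X (π - t) := by
        simp only [hf] at h
        linarith
      exact hFne t ht1 ht2 heq
    · simp only [hf] at h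
      linarith
  -- extend to (0, 2π]
  have hFpos2' : ∀ t : ℝ, 0 < t → t ≤ 2*π → X (π - t) < X (π + t) := by
    intro t ht1 ht2
    by_cases hle : t ≤ π
    · exact hFpos2 t ht1 hle
    · push_neg at hle
      have h1 : X (π + t) = X (t - π) + 2*π/k := by
        have h := hXper (t - π)
        have e : t - π + 2*π = π + t := by ring
        rw [e] at h
        exact h
      have h2 : X (π - t) = - X (t - π) := by
        have h := hXodd (t - π)
        have e : -(t - π) = π - t := by ring
        rw [e] at h
        exact h
      have h3 : 0 < X (t - π) := hXposAll _ (by linarith)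
      rw [h1, h2]
      linarith
  -- extend to all t > 0
  have hFposN : ∀ n : ℕ, ∀ t : ℝ, 0 < t → t ≤ 2*π*(n+1) → X (π - t) < X (π + t) := by
    intro n
    induction n with
    | zero =>
      intro t ht1 ht2
      push_cast at ht2
      exact hFpos2' t ht1 (by linarith)
    | succ n ih =>
      intro t ht1 ht2
      have hn0 : (0:ℝ) ≤ (n:ℝ) := Nat.cast_nonneg n
      have hp2 : 2*π ≤ 2*π*((n:ℝ)+1) := by nlinarith
      by_cases hle : t ≤ 2*π*((n:ℝ)+1)
      · exact ih t ht1 hle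
      · push_neg at hle
        have h1 : X (π + t) = X (π + (t - 2*π)) + 2*π/k := by
          have h := hXper (π + (t - 2*π))
          have e : π + (t - 2*π) + 2*π = π + t := by ring
          rw [e] at h
          linarith
        have h2 : X (π - t) = X (π - (t - 2*π)) - 2*π/k := by
          have h := hXper (π - t)
          have e : π - t + 2*π = π - (t - 2*π) := by ring
          rw [e] at h
          linarith
        have h3 : X (π - (t - 2*π)) < X (π + (t - 2*π)) := by
          apply ih (t - 2*π) (by linarith)
          push_cast at ht2
          linarith
        linarith
  have hFposAll : ∀ t : ℝ, 0 < t → X (π - t) < X (π + t) := by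
    intro t ht
    obtain ⟨n, hn⟩ := hbound t ht
    exact hFposN n t ht hn
  -- claim C: strict monotonicity across any symmetry center π*m
  have hC : ∀ (m : ℕ) (t : ℝ), 0 < t → X (π*m - t) < X (π*m + t) := by
    intro m t ht
    rcases Nat.even_or_odd m with ⟨j, hj⟩ | ⟨j, hj⟩
    · subst hj
      have e1 : π*((j+j : ℕ):ℝ) + t = t + 2*π*j := by push_cast; ring
      have e2 : π*((j+j : ℕ):ℝ) - t = -t + 2*π*j := by push_cast; ring
      rw [e1, e2, hXshift j t, hXshift j (-t), hXodd]
      have := hXposAll t ht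
      linarith
    · subst hj
      have e1 : π*((2*j+1 : ℕ):ℝ) + t = (π + t) + 2*π*j := by push_cast; ring
      have e2 : π*((2*j+1 : ℕ):ℝ) - t = (π - t) + 2*π*j := by push_cast; ring
      rw [e1, e2, hXshift j (π + t), hXshift j (π - t)]
      have := hFposAll t ht
      linarith
  -- the main contradiction for positive parameters with gap > 2π
  have key2 : ∀ u v : ℝ, 0 < u → u < v → 2*π < v - u → X u = X v → False := by
    intro u v hu huv hgap hXuv
    set m : ℕ := ⌊u/π⌋.toNat + 1 with hm
    have hfl : (0:ℤ) ≤ ⌊u/π⌋ := Int.floor_nonneg.mpr (by positivity)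
    have h' : ((⌊u/π⌋.toNat : ℕ) : ℝ) = ((⌊u/π⌋ : ℤ) : ℝ) := by
      exact_mod_cast Int.toNat_of_nonneg hfl
    have hmcast : ((m:ℕ):ℝ) = ((⌊u/π⌋ : ℤ) : ℝ) + 1 := by
      rw [hm]
      push_cast
      linarith [h']
    have hfl1 : ((⌊u/π⌋ : ℤ) : ℝ) ≤ u / π := Int.floor_le _
    have hfl2 : u / π < ((⌊u/π⌋ : ℤ) : ℝ) + 1 := Int.lt_floor_add_one _
    have hma : u < π*m := by
      rw [hmcast]
      have := (div_lt_iff₀ hπ).mp hfl2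
      linarith
    have hmb : π*(m:ℝ) < v := by
      rw [hmcast]
      have h1 : π * ((⌊u/π⌋ : ℤ) : ℝ) ≤ u := by
        have h2 := mul_le_mul_of_nonneg_left hfl1 (le_of_lt hπ)
        have h3 : π * (u / π) = u := by field_simp
        rw [h3] at h2
        exact h2
      linarith
    have i1 := hC m (v - π*m) (by linarith)
    have i2 := hC m (π*m - u) (by linarith)
    have e1 : π*(m:ℝ) + (v - π*m) = v := by ring
    have e2 : π*(m:ℝ) - (v - π*m) = 2*π*m - v := by ring
    have e3 : π*(m:ℝ) + (π*m - u) = 2*π*m - u := by ring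
    have e4 : π*(m:ℝ) - (π*m - u) = u := by ring
    rw [e1, e2] at i1
    rw [e3, e4] at i2
    have r1 : X (2*π*m - v) = m*(2*π/k) - X v := by
      have h := hXshift m (-v)
      rw [hXodd] at h
      have e : -v + 2*π*m = 2*π*m - v := by ring
      rw [e] at h
      linarith
    have r2 : X (2*π*m - u) = m*(2*π/k) - X u := by
      have h := hXshift m (-u)
      rw [hXodd] at h
      have e : -u + 2*π*m = 2*π*m - u := by ring
      rw [e] at h
      linarith
    rw [r1] at i1
    rw [r2] at i2
    linarith
  -- general intersection kills us
  have key : ∀ u v : ℝ, u < v → X u = X v → Y u = Y v → False := by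
    intro u v huv hXe hYe
    by_cases hgap : v - u ≤ 2*π
    · -- small gap: translate into the window
      set n : ℤ := ⌊u / (2*π)⌋ with hn
      have h2π : (0:ℝ) < 2*π := by linarith
      have hn1 : ((n:ℤ):ℝ) ≤ u / (2*π) := Int.floor_le _
      have hn2 : u / (2*π) < ((n:ℤ):ℝ) + 1 := Int.lt_floor_add_one _
      have hu1 : 2*π*((n:ℤ):ℝ) ≤ u := by
        have := (le_div_iff₀ h2π).mp hn1
        linarith
      have hu2 : u < 2*π*(((n:ℤ):ℝ)+1) := by
        have := (div_lt_iff₀ h2π).mp hn2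
        linarith
      have hXα := hXshiftZ (-n) u
      have hXβ := hXshiftZ (-n) v
      have hYα := hYshiftZ (-n) u
      have hYβ := hYshiftZ (-n) v
      have cα : u + 2*π*((-n : ℤ):ℝ) = u - 2*π*((n:ℤ):ℝ) := by push_cast; ring
      have cβ : v + 2*π*((-n : ℤ):ℝ) = v - 2*π*((n:ℤ):ℝ) := by push_cast; ring
      rw [cα] at hXα hYα
      rw [cβ] at hXβ hYβ
      apply hpair (u - 2*π*((n:ℤ):ℝ)) (v - 2*π*((n:ℤ):ℝ))
        (by linarith) (by linarith) (by linarith) (by linarith)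
        (by intro hh; linarith)
      · rw [hXα, hXβ, hXe]
      · rw [hYα, hYβ, hYe]
    · push_neg at hgap
      rcases lt_trichotomy 0 u with hu | hu | hu
      · exact key2 u v hu huv hgap hXe
      · -- u = 0
        have hv : 0 < v := by linarith
        have h1 : X u = 0 := by rw [← hu, hX0]
        have h2 := hXposAll v hv
        linarith [hXe]
      · -- u < 0 : then v < 0 too, reflect
        have hv : v < 0 := by
          by_contra hv
          push_neg at hv
          have hXu : X u < 0 := by
            have h1 := hXposAll (-u) (by linarith)
            have h2 := hXodd u
            linarith
          rcases eq_or_lt_of_le hv with hv0 | hv0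
          · have : X v = 0 := by rw [← hv0, hX0]
            linarith [hXe]
          · have := hXposAll v hv0
            linarith [hXe]
        have h1 : X (-v) = X (-u) := by rw [hXodd, hXodd, hXe]
        exact key2 (-v) (-u) (by linarith) (by linarith) (by linarith) h1
  rcases lt_or_gt_of_ne hab with h | h
  · exact key a b h hXab hYab
  · exact key b a h hXab.symm hYab.symm
end

section
/- For every a > 0, the function k ↦ k·coth(a·k) is strictly increasing on (0, ∞); that is, for all 0 < k₁ < k₂ one has k₁·coth(a·k₁) < k₂·coth(a·k₂). -/
open Real

/-- The hyperbolic cotangent `coth x = cosh x / sinh x`. -/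
noncomputable def coth (x : ℝ) : ℝ := Real.cosh x / Real.sinh x

lemma xcoth_strictMonoOn :
    StrictMonoOn (fun x : ℝ => x * Real.cosh x / Real.sinh x) (Set.Ioi 0) := by
  have hderiv : ∀ x : ℝ, 0 < x →
      HasDerivAt (fun x : ℝ => x * Real.cosh x / Real.sinh x)
        (((1 * Real.cosh x + x * Real.sinh x) * Real.sinh x -
          x * Real.cosh x * Real.cosh x) / Real.sinh x ^ 2) x := by
    intro x hx
    have hs : Real.sinh x ≠ 0 := ne_of_gt (Real.sinh_pos_iff.mpr hx)
    exact ((hasDerivAt_id x).mul (Real.hasDerivAt_cosh x)).div (Real.hasDerivAt_sinh x) hs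
  apply strictMonoOn_of_deriv_pos (convex_Ioi 0)
  · apply ContinuousOn.div
    · exact (continuous_id.mul Real.continuous_cosh).continuousOn
    · exact Real.continuous_sinh.continuousOn
    · intro x hx; exact ne_of_gt (Real.sinh_pos_iff.mpr hx)
  · intro x hx
    rw [interior_Ioi] at hx
    rw [(hderiv x hx).deriv]
    have hs : 0 < Real.sinh x := Real.sinh_pos_iff.mpr hx
    have hc : 1 < Real.cosh x := Real.one_lt_cosh.mpr (ne_of_gt hx)
    have hxs : x < Real.sinh x := Real.self_lt_sinh_iff.mpr hx
    have hid : Real.cosh x ^ 2 - Real.sinh x ^ 2 = 1 := Real.cosh_sq_sub_sinh_sq x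
    apply div_pos _ (by positivity)
    nlinarith

/-- For every `a > 0`, the function `k ↦ k · coth (a·k)` is strictly increasing on `(0,∞)`. -/
theorem mul_coth_strictMono
    (a : ℝ) (ha : 0 < a) (k₁ k₂ : ℝ) (hk₁ : 0 < k₁) (hk₁₂ : k₁ < k₂) :
    k₁ * coth (a * k₁) < k₂ * coth (a * k₂) := by
  have h1 : 0 < a * k₁ := mul_pos ha hk₁
  have h2 : 0 < a * k₂ := mul_pos ha (hk₁.trans hk₁₂)
  have key := xcoth_strictMonoOn h1 h2 (by nlinarith : a * k₁ < a * k₂)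
  simp only at key
  have e1 : k₁ * coth (a * k₁) = (1/a) * ((a*k₁) * Real.cosh (a*k₁) / Real.sinh (a*k₁)) := by
    unfold coth; field_simp
  have e2 : k₂ * coth (a * k₂) = (1/a) * ((a*k₂) * Real.cosh (a*k₂) / Real.sinh (a*k₂)) := by
    unfold coth; field_simp
  rw [e1, e2]
  exact mul_lt_mul_of_pos_left key (by positivity)
end

section
/- Fix H ∈ (0,1) and ω₀ ∈ ℝ, and define the dispersion function 𝔡(k) = 1/(k·(coth(k(1−H)) + coth(kH))) − (1/2)ω₀H for k > 0. Then 𝔡 is strictly decreasing on (0,∞). Consequently, for every q ∈ ℝ and every k > 0 there is at most one positive integer n with q = 𝔡(nk). -/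
open Real

/-- The dispersion function `𝔡` of the two-layer constant-vorticity problem. -/
noncomputable def dispersion (H ω₀ k : ℝ) : ℝ :=
  1 / (k * (coth (k * (1 - H)) + coth (k * H))) - (1 / 2) * ω₀ * H

private noncomputable def fct (x : ℝ) : ℝ := x * Real.cosh x / Real.sinh x

private lemma fct_pos {x : ℝ} (hx : 0 < x) : 0 < fct x :=
  div_pos (mul_pos hx (Real.cosh_pos x)) (Real.sinh_pos_iff.2 hx)

private lemma self_lt_sinh_mul_cosh {x : ℝ} (hx : 0 < x) :
    x < Real.sinh x * Real.cosh x := by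
  have h := (Real.self_lt_sinh_iff.2 (by linarith : (0:ℝ) < 2 * x))
  rw [Real.sinh_two_mul] at h
  linarith

private lemma fct_hasDerivAt {x : ℝ} (hx : 0 < x) :
    HasDerivAt fct ((Real.sinh x * Real.cosh x - x) / (Real.sinh x) ^ 2) x := by
  have hs : Real.sinh x ≠ 0 := ne_of_gt (Real.sinh_pos_iff.2 hx)
  have h1 : HasDerivAt (fun y => y * Real.cosh y) (1 * Real.cosh x + x * Real.sinh x) x :=
    (hasDerivAt_id x).mul (Real.hasDerivAt_cosh x)
  have h2 := h1.div (Real.hasDerivAt_sinh x) hs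
  convert h2 using 1
  have h3 := Real.cosh_sq_sub_sinh_sq x
  · rfl
  · rfl
  · funext y; rfl
  rw [div_left_inj' (pow_ne_zero 2 hs)]
  nlinarith [Real.cosh_sq_sub_sinh_sq x]

private lemma fct_strictMono : StrictMonoOn fct (Set.Ioi 0) := by
  apply strictMonoOn_of_deriv_pos (convex_Ioi 0)
  · intro x hx
    exact (fct_hasDerivAt hx).differentiableAt.continuousAt.continuousWithinAt
  · intro x hx
    rw [interior_Ioi] at hx
    rw [(fct_hasDerivAt hx).deriv]
    exact div_pos (by linarith [self_lt_sinh_mul_cosh hx]) (pow_pos (Real.sinh_pos_iff.2 hx) 2)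

private lemma key_rw {a k : ℝ} (ha : 0 < a) (hk : 0 < k) :
    k * coth (k * a) = fct (k * a) / a := by
  have hs : Real.sinh (k * a) ≠ 0 := ne_of_gt (Real.sinh_pos_iff.2 (mul_pos hk ha))
  unfold coth fct
  field_simp

/-- The dispersion function is strictly decreasing on `(0,∞)`; consequently, for
every `q` and every `k > 0` there is at most one positive integer `n` with
`q = 𝔡(n k)`. -/
theorem dispersion_strictAnti
    (H ω₀ : ℝ) (hH : H ∈ Set.Ioo (0 : ℝ) 1) :
    StrictAntiOn (dispersion H ω₀) (Set.Ioi 0)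
    ∧ ∀ (q k : ℝ), 0 < k → ∀ m n : ℕ, 0 < m → 0 < n →
        q = dispersion H ω₀ ((m : ℝ) * k) → q = dispersion H ω₀ ((n : ℝ) * k) →
        m = n := by
  obtain ⟨hH0, hH1⟩ := hH
  have ha : 0 < 1 - H := by linarith
  have hF : ∀ k : ℝ, 0 < k →
      k * (coth (k * (1 - H)) + coth (k * H)) =
        fct (k * (1 - H)) / (1 - H) + fct (k * H) / H := by
    intro k hk
    rw [mul_add, key_rw ha hk, key_rw hH0 hk]
  have hFpos : ∀ k : ℝ, 0 < k → 0 < k * (coth (k * (1 - H)) + coth (k * H)) := by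
    intro k hk
    rw [hF k hk]
    have := fct_pos (mul_pos hk ha)
    have := fct_pos (mul_pos hk hH0)
    positivity
  have hanti : StrictAntiOn (dispersion H ω₀) (Set.Ioi 0) := by
    intro x hx y hy hxy
    have hx' : (0:ℝ) < x := hx
    have hy' : (0:ℝ) < y := hy
    have hlt : x * (coth (x * (1 - H)) + coth (x * H)) <
        y * (coth (y * (1 - H)) + coth (y * H)) := by
      rw [hF x hx', hF y hy']
      have h1 := fct_strictMono (Set.mem_Ioi.2 (mul_pos hx' ha))
        (Set.mem_Ioi.2 (mul_pos hy' ha)) (mul_lt_mul_of_pos_right hxy ha)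
      have h2 := fct_strictMono (Set.mem_Ioi.2 (mul_pos hx' hH0))
        (Set.mem_Ioi.2 (mul_pos hy' hH0)) (mul_lt_mul_of_pos_right hxy hH0)
      gcongr
    have := one_div_lt_one_div_of_lt (hFpos x hx') hlt
    unfold dispersion
    linarith
  refine ⟨hanti, ?_⟩
  intro q k hk m n hm hn hq1 hq2
  have hmk : ((m : ℝ) * k) ∈ Set.Ioi (0:ℝ) :=
    Set.mem_Ioi.2 (mul_pos (by exact_mod_cast hm) hk)
  have hnk : ((n : ℝ) * k) ∈ Set.Ioi (0:ℝ) :=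
    Set.mem_Ioi.2 (mul_pos (by exact_mod_cast hn) hk)
  have heq : ((m : ℝ) * k) = ((n : ℝ) * k) :=
    hanti.injOn hmk hnk (by rw [← hq1, ← hq2])
  have : (m : ℝ) = n := mul_right_cancel₀ (ne_of_gt hk) heq
  exact_mod_cast this
end

section
/- Let f : ℝ → ℝ be continuously differentiable on [0,π] with f(0) = f(π) = 0, f'(0) < 0, f'(π) > 0, and f(x) < 0 for all x ∈ (0,π). Then there exists ε > 0 such that every function g : ℝ → ℝ that is continuously differentiable on [0,π] and satisfies g(0) = g(π) = 0, sup_{x∈[0,π]} |f(x) − g(x)| < ε and sup_{x∈[0,π]} |f'(x) − g'(x)| < ε also satisfies g'(0) < 0, g'(π) > 0 and g(x) < 0 for all x ∈ (0,π). -/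
open Real

/-- Openness of the nodal configuration: the set of `C¹` functions on `[0,π]`
vanishing at the endpoints, strictly negative inside, with `f'(0) < 0 < f'(π)`,
is open in the `C¹` topology. -/
theorem nodal_open_condition
    (f f' : ℝ → ℝ)
    (hf : ∀ x ∈ Set.Icc (0 : ℝ) π, HasDerivAt f (f' x) x)
    (hf' : ContinuousOn f' (Set.Icc (0 : ℝ) π))
    (h0 : f 0 = 0) (hπ : f π = 0)
    (hd0 : f' 0 < 0) (hdπ : f' π > 0)
    (hneg : ∀ x ∈ Set.Ioo (0 : ℝ) π, f x < 0) :
    ∃ ε > 0, ∀ g g' : ℝ → ℝ,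
      (∀ x ∈ Set.Icc (0 : ℝ) π, HasDerivAt g (g' x) x) →
      ContinuousOn g' (Set.Icc (0 : ℝ) π) →
      g 0 = 0 → g π = 0 →
      (∀ x ∈ Set.Icc (0 : ℝ) π, |f x - g x| < ε) →
      (∀ x ∈ Set.Icc (0 : ℝ) π, |f' x - g' x| < ε) →
      g' 0 < 0 ∧ g' π > 0 ∧ ∀ x ∈ Set.Ioo (0 : ℝ) π, g x < 0 := by
  have hπ0 : (0:ℝ) < π := pi_pos
  have hfc : ContinuousOn f (Set.Icc 0 π) :=
    fun x hx => (hf x hx).continuousAt.continuousWithinAt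
  have hc0 : 0 < -f' 0 / 2 := by linarith
  have hcπ : 0 < f' π / 2 := by linarith
  have h0mem : (0:ℝ) ∈ Set.Icc (0:ℝ) π := ⟨le_refl _, hπ0.le⟩
  have hπmem : π ∈ Set.Icc (0:ℝ) π := ⟨hπ0.le, le_refl _⟩
  obtain ⟨δ₁, hδ₁pos, hδ₁⟩ := Metric.continuousWithinAt_iff.mp (hf' 0 h0mem) _ hc0
  obtain ⟨δ₂, hδ₂pos, hδ₂⟩ := Metric.continuousWithinAt_iff.mp (hf' π hπmem) _ hcπ
  set δ := min (min δ₁ δ₂) (π/2) with hδdef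
  have hδpos : 0 < δ := lt_min (lt_min hδ₁pos hδ₂pos) (by linarith)
  have hδle : δ ≤ π/2 := min_le_right _ _
  have hδ1 : δ ≤ δ₁ := (min_le_left _ _).trans (min_le_left _ _)
  have hδ2 : δ ≤ δ₂ := (min_le_left _ _).trans (min_le_right _ _)
  have hKne : (Set.Icc δ (π - δ)).Nonempty := ⟨δ, le_refl _, by linarith⟩
  have hKsub : Set.Icc δ (π - δ) ⊆ Set.Icc 0 π :=
    Set.Icc_subset_Icc hδpos.le (by linarith)
  obtain ⟨x₀, hx₀K, hx₀max⟩ := isCompact_Icc.exists_isMaxOn hKne (hfc.mono hKsub)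
  have hx₀neg : f x₀ < 0 :=
    hneg x₀ ⟨lt_of_lt_of_le hδpos hx₀K.1, lt_of_le_of_lt hx₀K.2 (by linarith)⟩
  set ε := min (min (-f' 0 / 2) (f' π / 2)) (-f x₀ / 2) with hεdef
  have hεpos : 0 < ε := lt_min (lt_min hc0 hcπ) (by linarith)
  have hε1 : ε ≤ -f' 0 / 2 := (min_le_left _ _).trans (min_le_left _ _)
  have hε2 : ε ≤ f' π / 2 := (min_le_left _ _).trans (min_le_right _ _)
  have hε3 : ε ≤ -f x₀ / 2 := min_le_right _ _
  refine ⟨ε, hεpos, ?_⟩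
  intro g g' hg hg'c hg0 hgπ hfg hfg'
  have hgc : ContinuousOn g (Set.Icc 0 π) :=
    fun x hx => (hg x hx).continuousAt.continuousWithinAt
  have hG0 : g' 0 < 0 := by
    have := abs_lt.mp (hfg' 0 h0mem); linarith
  have hGπ : g' π > 0 := by
    have := abs_lt.mp (hfg' π hπmem); linarith
  refine ⟨hG0, hGπ, ?_⟩
  rintro x ⟨hx0, hxπ⟩
  rcases le_or_gt x δ with h1 | h1
  · -- MVT on [0, x]
    have hsub : Set.Icc (0:ℝ) x ⊆ Set.Icc 0 π := Set.Icc_subset_Icc le_rfl hxπ.le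
    obtain ⟨ξ, hξ, hξeq⟩ := exists_hasDerivAt_eq_slope g g' hx0 (hgc.mono hsub)
      (fun y hy => hg y ⟨hy.1.le, (hy.2.le.trans hxπ.le)⟩)
    have hξmem : ξ ∈ Set.Icc (0:ℝ) π := ⟨hξ.1.le, hξ.2.le.trans hxπ.le⟩
    have hξd : dist ξ 0 < δ₁ := by
      rw [Real.dist_eq, sub_zero, abs_of_pos hξ.1]
      exact lt_of_lt_of_le hξ.2 (h1.trans hδ1)
    have hfξ : f' ξ < -(-f' 0 / 2) := by
      have := abs_lt.mp (Real.dist_eq (f' ξ) (f' 0) ▸ hδ₁ hξmem hξd); linarith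
    have hgξ : g' ξ < 0 := by
      have := abs_lt.mp (hfg' ξ hξmem); linarith
    have hx : g x = g' ξ * x := by
      rw [hξeq, hg0]; field_simp; ring
    rw [hx]
    exact mul_neg_of_neg_of_pos hgξ hx0
  · rcases le_or_gt (π - δ) x with h2 | h2
    · -- MVT on [x, π]
      have hsub : Set.Icc x π ⊆ Set.Icc 0 π := Set.Icc_subset_Icc hx0.le le_rfl
      obtain ⟨ξ, hξ, hξeq⟩ := exists_hasDerivAt_eq_slope g g' hxπ (hgc.mono hsub)
        (fun y hy => hg y ⟨hx0.le.trans hy.1.le, hy.2.le⟩)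
      have hξmem : ξ ∈ Set.Icc (0:ℝ) π := ⟨hx0.le.trans hξ.1.le, hξ.2.le⟩
      have hξd : dist ξ π < δ₂ := by
        rw [Real.dist_eq, abs_of_neg (by linarith [hξ.2] : ξ - π < 0)]
        have : π - ξ < π - x := by linarith [hξ.1]
        have : π - x ≤ δ := by linarith
        linarith [hξ.1, hδ2]
      have hfξ : f' ξ > f' π / 2 := by
        have := abs_lt.mp (Real.dist_eq (f' ξ) (f' π) ▸ hδ₂ hξmem hξd); linarith
      have hgξ : g' ξ > 0 := by
        have := abs_lt.mp (hfg' ξ hξmem); linarith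
      have hslope : g' ξ = -g x / (π - x) := by
        rw [hξeq, hgπ]; ring_nf
      have hpx : 0 < π - x := by linarith
      have : 0 < -g x / (π - x) := hslope ▸ hgξ
      have : 0 < -g x := by
        by_contra h
        push_neg at h
        exact absurd this (not_lt.mpr (div_nonpos_of_nonpos_of_nonneg h hpx.le))
      linarith
    · -- middle region
      have hxK : x ∈ Set.Icc δ (π - δ) := ⟨h1.le, h2.le⟩
      have hfx : f x ≤ f x₀ := hx₀max hxK
      have := abs_lt.mp (hfg x (hKsub hxK))
      linarith
end

section
/- Let a₁ < b₁ and a₂ < b₂ be real numbers and let R = {z ∈ ℂ : a₁ < Re z < b₁ and a₂ < Im z < b₂} be the corresponding open rectangle. Suppose f : ℂ → ℂ is continuous on the closure of R and complex-differentiable at every point of R, and suppose f maps the topological boundary of R into the set {z ∈ ℂ : Re z = 0 or Im z = 0}. Then f is constant on the closure of R. -/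
open Complex Metric Set Bornology

/-- A function holomorphic on an open rectangle, continuous up to the boundary,
whose boundary values lie in `ℝ ∪ iℝ`, is constant on the closed rectangle. -/
theorem holomorphic_rectangle_boundary_in_axes_constant
    (a₁ b₁ a₂ b₂ : ℝ) (h₁ : a₁ < b₁) (h₂ : a₂ < b₂)
    (R : Set ℂ)
    (hR : R = {z : ℂ | a₁ < z.re ∧ z.re < b₁ ∧ a₂ < z.im ∧ z.im < b₂})
    (f : ℂ → ℂ)
    (hcont : ContinuousOn f (closure R))
    (hdiff : ∀ z ∈ R, DifferentiableAt ℂ f z)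
    (hbd : ∀ z ∈ frontier R, (f z).re = 0 ∨ (f z).im = 0) :
    ∀ z ∈ closure R, ∀ w ∈ closure R, f z = f w := by
  have hR' : R = Ioo a₁ b₁ ×ℂ Ioo a₂ b₂ := by
    rw [hR]; ext z; simp [Complex.mem_reProdIm, Set.mem_Ioo, and_assoc]
  have hRo : IsOpen R := hR' ▸ isOpen_Ioo.reProdIm isOpen_Ioo
  have hRb : IsBounded R := hR' ▸ (isBounded_Ioo _ _).reProdIm (isBounded_Ioo _ _)
  have hRconv : Convex ℝ R := by
    have : R = {z : ℂ | a₁ < z.re} ∩ ({z : ℂ | z.re < b₁} ∩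
        ({z : ℂ | a₂ < z.im} ∩ {z : ℂ | z.im < b₂})) := by
      rw [hR]; ext z; simp only [Set.mem_setOf_eq, Set.mem_inter_iff, and_assoc]
    rw [this]
    exact (convex_halfSpace_re_gt a₁).inter ((convex_halfSpace_re_lt b₁).inter
      ((convex_halfSpace_im_gt a₂).inter (convex_halfSpace_im_lt b₂)))
  -- the square of f has zero imaginary part on the frontier
  have hsq_im : ∀ z ∈ frontier R, (f z ^ 2).im = 0 := by
    intro z hz
    rcases hbd z hz with h | h <;> simp [pow_two, Complex.mul_im, h]
  -- maximum modulus for exp(± I * f²)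
  have key : ∀ z ∈ closure R, (f z ^ 2).im = 0 := by
    have hd : ∀ (c : ℂ), DiffContOnCl ℂ (fun z => Complex.exp (c * f z ^ 2)) R := by
      intro c
      refine ⟨fun z hz => ?_, ?_⟩
      · exact ((((hdiff z hz).pow 2).const_mul c).cexp).differentiableWithinAt
      · exact Complex.continuous_exp.comp_continuousOn (continuousOn_const.mul (hcont.pow 2))
    have hb : ∀ (c : ℂ), c.re = 0 → ∀ z ∈ frontier R,
        ‖Complex.exp (c * f z ^ 2)‖ ≤ 1 := by
      intro c hc z hz
      have := hsq_im z hz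
      simp [Complex.norm_exp, Complex.mul_re, this, hc]
    intro z hz
    have h1 : ‖Complex.exp (I * f z ^ 2)‖ ≤ 1 :=
      Complex.norm_le_of_forall_mem_frontier_norm_le hRb (hd I) (hb I Complex.I_re) hz
    have h2 : ‖Complex.exp (-I * f z ^ 2)‖ ≤ 1 :=
      Complex.norm_le_of_forall_mem_frontier_norm_le hRb (hd (-I))
        (hb (-I) (by simp)) hz
    rw [Complex.norm_exp] at h1 h2
    have e1 : (I * f z ^ 2).re = -(f z ^ 2).im := by simp [Complex.mul_re]
    have e2 : (-I * f z ^ 2).re = (f z ^ 2).im := by simp [Complex.mul_re]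
    rw [e1] at h1; rw [e2] at h2
    have h1' := Real.exp_le_exp.mp (by simpa using h1 : Real.exp (-(f z ^2).im) ≤ Real.exp 0)
    have h2' := Real.exp_le_exp.mp (by simpa using h2 : Real.exp ((f z ^2).im) ≤ Real.exp 0)
    linarith
  -- f² is analytic on R, with image in ℝ, so constant by open mapping
  have hanal : AnalyticOnNhd ℂ (fun z => f z ^ 2) R :=
    (DifferentiableOn.analyticOnNhd
      (fun z hz => ((hdiff z hz).pow 2).differentiableWithinAt) hRo)
  have hz₀ : (⟨(a₁ + b₁) / 2, (a₂ + b₂) / 2⟩ : ℂ) ∈ R := by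
    rw [hR]; constructor <;> [skip; constructor] <;> [skip; skip; constructor] <;>
      simp <;> linarith
  obtain ⟨c, hc⟩ : ∃ c, ∀ z ∈ R, f z ^ 2 = c := by
    rcases hanal.is_constant_or_isOpen hRconv.isPreconnected with h | h
    · exact h
    · exfalso
      have hopen : IsOpen ((fun z => f z ^ 2) '' R) := h R Subset.rfl hRo
      have hmem : f (⟨(a₁ + b₁) / 2, (a₂ + b₂) / 2⟩ : ℂ) ^ 2 ∈ (fun z => f z ^ 2) '' R :=
        ⟨_, hz₀, rfl⟩
      obtain ⟨ε, hε, hball⟩ := Metric.isOpen_iff.mp hopen _ hmem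
      set w₀ := f (⟨(a₁ + b₁) / 2, (a₂ + b₂) / 2⟩ : ℂ) ^ 2
      have habs : ‖(ε : ℂ) / 2 * I‖ = ε / 2 := by
        rw [norm_mul, Complex.norm_I, mul_one,
          show ((ε : ℂ) / 2) = (((ε / 2 : ℝ)) : ℂ) by push_cast; ring,
          Complex.norm_real, Real.norm_eq_abs, abs_of_pos (by linarith)]
      have : w₀ + (ε / 2) * I ∈ ball w₀ ε := by
        simp only [mem_ball, dist_eq, add_sub_cancel_left]
        rw [habs]; linarith
      obtain ⟨x, hx, hfx⟩ := hball this
      have him : (f x ^ 2).im = 0 := key x (subset_closure hx)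
      have hw₀ : w₀.im = 0 := key _ (subset_closure hz₀)
      have : (w₀ + (ε / 2) * I).im = 0 := by rw [← hfx]; exact him
      simp [hw₀, Complex.add_im, Complex.mul_im] at this
      linarith
  -- extend constancy of f² to the closure
  have hc' : ∀ z ∈ closure R, f z ^ 2 = c := by
    have := Set.EqOn.of_subset_closure (s := R) (t := closure R)
      (f := fun z => f z ^ 2) (g := fun _ => c) hc (hcont.pow 2) continuousOn_const
      subset_closure Subset.rfl
    exact this
  -- finish: f takes values in {√c, -√c}, use connectedness
  intro z hz w hw
  have hzw : (f z - f w) * (f z + f w) = 0 := by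
    have h := (hc' z hz).trans (hc' w hw).symm
    linear_combination h
  rcases mul_eq_zero.mp hzw with h | h
  · exact sub_eq_zero.mp h
  · -- f z = -f w case
    have hfz : f z = -f w := eq_neg_of_add_eq_zero_left h
    by_contra hne
    have hfw_ne : f w ≠ -f w := fun hh => hne (hfz.trans hh.symm)
    have hd : 0 < dist (f w) (-f w) := dist_pos.mpr hfw_ne
    have hpc : IsPreconnected (f '' closure R) :=
      (hRconv.closure.isPreconnected).image f hcont
    have hsub : f '' closure R ⊆ ball (f w) (dist (f w) (-f w) / 2) ∪
        ball (-f w) (dist (f w) (-f w) / 2) := by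
      rintro y ⟨x, hx, rfl⟩
      have hx2 : (f x - f w) * (f x + f w) = 0 := by
        have h' := (hc' x hx).trans (hc' w hw).symm
        linear_combination h'
      rcases mul_eq_zero.mp hx2 with h' | h'
      · left
        rw [sub_eq_zero.mp h']
        exact mem_ball_self (by linarith)
      · right
        rw [eq_neg_of_add_eq_zero_left h']
        exact mem_ball_self (by linarith)
    obtain ⟨y, -, hyu, hyv⟩ := hpc _ _ isOpen_ball isOpen_ball hsub
      ⟨f w, ⟨w, hw, rfl⟩, mem_ball_self (by linarith)⟩
      ⟨f z, ⟨z, hz, rfl⟩, by rw [hfz]; exact mem_ball_self (by linarith)⟩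
    have t1 : dist (f w) y < dist (f w) (-f w) / 2 := by
      rw [dist_comm]; exact hyu
    have t2 : dist y (-f w) < dist (f w) (-f w) / 2 := hyv
    have := dist_triangle (f w) y (-f w)
    linarith
end

section
/- Let Ω ⊆ ℝ² be open, let h₁, k ∈ ℝ with k ≠ 0, and let χ, η, s : Ω → ℝ be twice continuously differentiable with s_x + 1 ≠ 0 at every point of Ω. Suppose that on Ω: h₁·(k·χ_x + 1) − k·η_x·s_y + k·(s_x + 1)·η_y = 0, (k·χ_x + 1)·s_y + k·h₁·η_x − k·χ_y·(s_x + 1) = 0, and s_xx + s_yy = 0. Then on Ω: ((s_y² + h₁²)/(s_x + 1))·η_xx − 2·s_y·η_xy + (s_x + 1)·η_yy + (((s_x + 1)² − s_y² − h₁²)·s_xx + 2·(s_x + 1)·s_xy·s_y)/(s_x + 1)² · η_x = 0. -/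
private lemma fd_zero {Ω : Set (ℝ × ℝ)} (hΩ : IsOpen Ω) {p : ℝ × ℝ} (hp : p ∈ Ω)
    {f : ℝ × ℝ → ℝ} (h : ∀ q ∈ Ω, f q = 0) (w : ℝ × ℝ) : fderiv ℝ f p w = 0 := by
  have he : f =ᶠ[nhds p] fun _ => (0 : ℝ) :=
    Filter.eventuallyEq_of_mem (hΩ.mem_nhds hp) h
  rw [he.fderiv_eq, fderiv_fun_const]
  simp

private lemma fd_add {u v : ℝ × ℝ → ℝ} {p : ℝ × ℝ} (w : ℝ × ℝ)
    (hu : DifferentiableAt ℝ u p) (hv : DifferentiableAt ℝ v p) :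
    fderiv ℝ (fun q => u q + v q) p w = fderiv ℝ u p w + fderiv ℝ v p w := by
  rw [fderiv_fun_add hu hv]; simp

private lemma fd_sub {u v : ℝ × ℝ → ℝ} {p : ℝ × ℝ} (w : ℝ × ℝ)
    (hu : DifferentiableAt ℝ u p) (hv : DifferentiableAt ℝ v p) :
    fderiv ℝ (fun q => u q - v q) p w = fderiv ℝ u p w - fderiv ℝ v p w := by
  rw [fderiv_fun_sub hu hv]; simp

private lemma fd_mul {u v : ℝ × ℝ → ℝ} {p : ℝ × ℝ} (w : ℝ × ℝ)
    (hu : DifferentiableAt ℝ u p) (hv : DifferentiableAt ℝ v p) :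
    fderiv ℝ (fun q => u q * v q) p w
      = fderiv ℝ u p w * v p + u p * fderiv ℝ v p w := by
  rw [fderiv_fun_mul hu hv]
  simp only [ContinuousLinearMap.add_apply, ContinuousLinearMap.smul_apply, smul_eq_mul]
  ring

private lemma fd_const_mul (c : ℝ) {u : ℝ × ℝ → ℝ} {p : ℝ × ℝ} (w : ℝ × ℝ)
    (hu : DifferentiableAt ℝ u p) :
    fderiv ℝ (fun q => c * u q) p w = c * fderiv ℝ u p w := by
  rw [fderiv_const_mul hu]; simp

private lemma fd_add_const (c : ℝ) {u : ℝ × ℝ → ℝ} {p : ℝ × ℝ} (w : ℝ × ℝ) :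
    fderiv ℝ (fun q => u q + c) p w = fderiv ℝ u p w := by
  rw [fderiv_add_const]

private lemma diff_pd {f : ℝ × ℝ → ℝ} {p : ℝ × ℝ} (hf : ContDiffAt ℝ 2 f p) (v : ℝ × ℝ) :
    DifferentiableAt ℝ (fun q => fderiv ℝ f q v) p := by
  have h1 : ContDiffAt ℝ 1 (fderiv ℝ f) p := hf.fderiv_right (by norm_num)
  exact (h1.differentiableAt one_ne_zero).clm_apply (differentiableAt_const v)

private lemma fd_pd {f : ℝ × ℝ → ℝ} {p : ℝ × ℝ} (hf : ContDiffAt ℝ 2 f p) (v w : ℝ × ℝ) :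
    fderiv ℝ (fun q => fderiv ℝ f q v) p w = fderiv ℝ (fderiv ℝ f) p w v := by
  have h1 : DifferentiableAt ℝ (fderiv ℝ f) p :=
    (hf.fderiv_right (m := 1) (by norm_num)).differentiableAt one_ne_zero
  rw [fderiv_clm_apply h1 (differentiableAt_const v)]
  simp

private lemma pd_symm2 {f : ℝ × ℝ → ℝ} {p : ℝ × ℝ} (hf : ContDiffAt ℝ 2 f p) (v w : ℝ × ℝ) :
    fderiv ℝ (fun q => fderiv ℝ f q v) p w = fderiv ℝ (fun q => fderiv ℝ f q w) p v := by
  rw [fd_pd hf, fd_pd hf, (hf.isSymmSndFDerivAt (by simp)) w v]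


/-- Partial derivative in the first (horizontal) variable. -/
noncomputable def pdx (f : ℝ × ℝ → ℝ) (p : ℝ × ℝ) : ℝ := fderiv ℝ f p (1, 0)

/-- Partial derivative in the second (vertical) variable. -/
noncomputable def pdy (f : ℝ × ℝ → ℝ) (p : ℝ × ℝ) : ℝ := fderiv ℝ f p (0, 1)

/-- In the upper layer, the distorted Cauchy–Riemann equations together with
harmonicity of the distortion `s` imply that the interface height function `η`
satisfies a scalar second-order elliptic equation. -/
theorem upper_layer_eta_elliptic
    (Ω : Set (ℝ × ℝ)) (hΩ : IsOpen Ω) (h₁ k : ℝ) (hk : k ≠ 0)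
    (χ η s : ℝ × ℝ → ℝ)
    (hχ : ContDiffOn ℝ 2 χ Ω) (hη : ContDiffOn ℝ 2 η Ω) (hs : ContDiffOn ℝ 2 s Ω)
    (hsx : ∀ p ∈ Ω, pdx s p + 1 ≠ 0)
    (e1 : ∀ p ∈ Ω,
      h₁ * (k * pdx χ p + 1) - k * pdx η p * pdy s p + k * (pdx s p + 1) * pdy η p = 0)
    (e2 : ∀ p ∈ Ω,
      (k * pdx χ p + 1) * pdy s p + k * h₁ * pdx η p - k * pdy χ p * (pdx s p + 1) = 0)
    (e3 : ∀ p ∈ Ω, pdx (pdx s) p + pdy (pdy s) p = 0) :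
    ∀ p ∈ Ω,
      ((pdy s p ^ 2 + h₁ ^ 2) / (pdx s p + 1)) * pdx (pdx η) p
        - 2 * pdy s p * pdy (pdx η) p
        + (pdx s p + 1) * pdy (pdy η) p
        + (((pdx s p + 1) ^ 2 - pdy s p ^ 2 - h₁ ^ 2) * pdx (pdx s) p
            + 2 * (pdx s p + 1) * pdy (pdx s) p * pdy s p) / (pdx s p + 1) ^ 2
          * pdx η p = 0 := by
  intro p hp
  have hmem := hΩ.mem_nhds hp
  have hχp : ContDiffAt ℝ 2 χ p := hχ.contDiffAt hmem
  have hηp : ContDiffAt ℝ 2 η p := hη.contDiffAt hmem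
  have hsp : ContDiffAt ℝ 2 s p := hs.contDiffAt hmem
  -- base first derivatives as functions
  have dχx : DifferentiableAt ℝ (fun q => fderiv ℝ χ q ((1:ℝ), (0:ℝ))) p := diff_pd hχp _
  have dχy : DifferentiableAt ℝ (fun q => fderiv ℝ χ q ((0:ℝ), (1:ℝ))) p := diff_pd hχp _
  have dηx : DifferentiableAt ℝ (fun q => fderiv ℝ η q ((1:ℝ), (0:ℝ))) p := diff_pd hηp _
  have dηy : DifferentiableAt ℝ (fun q => fderiv ℝ η q ((0:ℝ), (1:ℝ))) p := diff_pd hηp _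
  have dsx : DifferentiableAt ℝ (fun q => fderiv ℝ s q ((1:ℝ), (0:ℝ))) p := diff_pd hsp _
  have dsy : DifferentiableAt ℝ (fun q => fderiv ℝ s q ((0:ℝ), (1:ℝ))) p := diff_pd hsp _
  -- expansions of the derivatives of the two relations
  have exp1 : ∀ w : ℝ × ℝ,
      h₁ * (k * fderiv ℝ (fun q => fderiv ℝ χ q (1, 0)) p w)
      - (k * fderiv ℝ (fun q => fderiv ℝ η q (1, 0)) p w * fderiv ℝ s p (0, 1)
         + k * fderiv ℝ η p (1, 0) * fderiv ℝ (fun q => fderiv ℝ s q (0, 1)) p w)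
      + (k * fderiv ℝ (fun q => fderiv ℝ s q (1, 0)) p w * fderiv ℝ η p (0, 1)
         + k * (fderiv ℝ s p (1, 0) + 1) * fderiv ℝ (fun q => fderiv ℝ η q (0, 1)) p w)
        = 0 := by
    intro w
    have h0 : fderiv ℝ (fun q =>
        (h₁ * (k * fderiv ℝ χ q (1, 0) + 1)
          - k * fderiv ℝ η q (1, 0) * fderiv ℝ s q (0, 1))
        + k * (fderiv ℝ s q (1, 0) + 1) * fderiv ℝ η q (0, 1)) p w = 0 :=
      fd_zero hΩ hp (fun q hq => e1 q hq) w
    rw [fd_add w (((((dχx.const_mul k).add_const 1).const_mul h₁)).fun_sub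
          ((dηx.const_mul k).fun_mul dsy)) (((dsx.add_const 1).const_mul k).fun_mul dηy),
        fd_sub w (((dχx.const_mul k).add_const 1).const_mul h₁) ((dηx.const_mul k).fun_mul dsy),
        fd_const_mul h₁ w ((dχx.const_mul k).add_const 1),
        fd_add_const 1 w,
        fd_const_mul k w dχx,
        fd_mul w (dηx.const_mul k) dsy,
        fd_const_mul k w dηx,
        fd_mul w ((dsx.add_const 1).const_mul k) dηy,
        fd_const_mul k w (dsx.add_const 1),
        fd_add_const 1 w] at h0
    linarith [h0]
  have exp2 : ∀ w : ℝ × ℝ,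
      (k * fderiv ℝ (fun q => fderiv ℝ χ q (1, 0)) p w) * fderiv ℝ s p (0, 1)
      + (k * fderiv ℝ χ p (1, 0) + 1) * fderiv ℝ (fun q => fderiv ℝ s q (0, 1)) p w
      + k * h₁ * fderiv ℝ (fun q => fderiv ℝ η q (1, 0)) p w
      - ((k * fderiv ℝ (fun q => fderiv ℝ χ q (0, 1)) p w) * (fderiv ℝ s p (1, 0) + 1)
         + k * fderiv ℝ χ p (0, 1) * fderiv ℝ (fun q => fderiv ℝ s q (1, 0)) p w) = 0 := by
    intro w
    have h0 : fderiv ℝ (fun q =>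
        ((k * fderiv ℝ χ q (1, 0) + 1) * fderiv ℝ s q (0, 1)
          + k * h₁ * fderiv ℝ η q (1, 0))
        - (k * fderiv ℝ χ q (0, 1)) * (fderiv ℝ s q (1, 0) + 1)) p w = 0 :=
      fd_zero hΩ hp (fun q hq => e2 q hq) w
    rw [fd_sub w (((dχx.const_mul k).add_const 1).fun_mul dsy |>.fun_add (dηx.const_mul (k * h₁)))
          ((dχy.const_mul k).fun_mul (dsx.add_const 1)),
        fd_add w (((dχx.const_mul k).add_const 1).fun_mul dsy) (dηx.const_mul (k * h₁)),
        fd_mul w ((dχx.const_mul k).add_const 1) dsy,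
        fd_add_const 1 w,
        fd_const_mul k w dχx,
        fd_const_mul (k * h₁) w dηx,
        fd_mul w (dχy.const_mul k) (dsx.add_const 1),
        fd_const_mul k w dχy,
        fd_add_const 1 w] at h0
    linarith [h0]
  -- symmetry of second derivatives
  have symη : fderiv ℝ (fun q => fderiv ℝ η q ((0:ℝ), (1:ℝ))) p (1, 0)
      = fderiv ℝ (fun q => fderiv ℝ η q ((1:ℝ), (0:ℝ))) p (0, 1) := pd_symm2 hηp _ _
  have syms : fderiv ℝ (fun q => fderiv ℝ s q ((0:ℝ), (1:ℝ))) p (1, 0)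
      = fderiv ℝ (fun q => fderiv ℝ s q ((1:ℝ), (0:ℝ))) p (0, 1) := pd_symm2 hsp _ _
  have symχ : fderiv ℝ (fun q => fderiv ℝ χ q ((0:ℝ), (1:ℝ))) p (1, 0)
      = fderiv ℝ (fun q => fderiv ℝ χ q ((1:ℝ), (0:ℝ))) p (0, 1) := pd_symm2 hχp _ _
  have hDx1 := exp1 (1, 0)
  have hDy1 := exp1 (0, 1)
  have hDx2 := exp2 (1, 0)
  rw [syms, symη] at hDx1
  rw [syms, symχ] at hDx2
  have hE1 : h₁ * (k * fderiv ℝ χ p (1, 0) + 1)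
      - k * fderiv ℝ η p (1, 0) * fderiv ℝ s p (0, 1)
      + k * (fderiv ℝ s p (1, 0) + 1) * fderiv ℝ η p (0, 1) = 0 := e1 p hp
  have hE2 : (k * fderiv ℝ χ p (1, 0) + 1) * fderiv ℝ s p (0, 1)
      + k * h₁ * fderiv ℝ η p (1, 0)
      - k * fderiv ℝ χ p (0, 1) * (fderiv ℝ s p (1, 0) + 1) = 0 := e2 p hp
  have hE3 : fderiv ℝ (fun q => fderiv ℝ s q ((1:ℝ), (0:ℝ))) p (1, 0)
      + fderiv ℝ (fun q => fderiv ℝ s q ((0:ℝ), (1:ℝ))) p (0, 1) = 0 := e3 p hp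
  have hA : fderiv ℝ s p ((1:ℝ), (0:ℝ)) + 1 ≠ 0 := hsx p hp
  have pdx_def : ∀ f : ℝ × ℝ → ℝ, pdx f = fun q => fderiv ℝ f q (1, 0) := fun _ => rfl
  have pdy_def : ∀ f : ℝ × ℝ → ℝ, pdy f = fun q => fderiv ℝ f q (0, 1) := fun _ => rfl
  simp only [pdx_def, pdy_def]
  set a := fderiv ℝ s p ((1:ℝ), (0:ℝ)) with ha
  set b := fderiv ℝ s p ((0:ℝ), (1:ℝ)) with hb
  set ex := fderiv ℝ η p ((1:ℝ), (0:ℝ)) with hex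
  set sxx := fderiv ℝ (fun q => fderiv ℝ s q ((1:ℝ), (0:ℝ))) p (1, 0) with hsxx
  set sxy := fderiv ℝ (fun q => fderiv ℝ s q ((1:ℝ), (0:ℝ))) p (0, 1) with hsxy
  field_simp
  apply mul_left_cancel₀ hk
  linear_combination (a + 1) ^ 2 * hDy1 - (a + 1) * b * hDx1
    + (sxx * b - (a + 1) * sxy) * hE1 - sxx * h₁ * hE2
    + (a + 1) ^ 2 * k * ex * hE3 + h₁ * (a + 1) * hDx2
end

section
/- Let h₀, k, ω₀ ∈ ℝ with h₀ ≠ 0 and k ≠ 0, and let u₀x, v₀x, v₀y, η₀x, η₀y, χ₀x, u₁x, u₁y, v₁x, v₁y, χ₁x, χ₁y, η₁x, η₁y be real numbers satisfying: (i) k·η₁y·u₁x − k·η₁x·u₁y − k·χ₁y·v₁x + (k·χ₁x + 1)·v₁y = 0; (ii) u₀x = u₁x, v₀x = v₁x, χ₀x = χ₁x and η₀x = η₁x; (iii) h₀·u₀x + v₀y − h₀·ω₀·η₀x = 0; (iv) h₀·(k·χ₀x + 1) − k·η₀y = 0. Then h₀·ω₀·η₀x·η₁y − h₀·χ₁y·v₀x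 − h₀·η₀x·u₁y + η₀y·v₁y − η₁y·v₀y = 0. -/
/-- First interface identity used in the maximum-principle (closed condition)
argument for the nodal property of the vertical velocity. -/
theorem interface_identity_one
    (h₀ k ω₀ : ℝ) (hh₀ : h₀ ≠ 0) (hk : k ≠ 0)
    (u₀x v₀x v₀y η₀x η₀y χ₀x u₁x u₁y v₁x v₁y χ₁x χ₁y η₁x η₁y : ℝ)
    (e1 : k * η₁y * u₁x - k * η₁x * u₁y - k * χ₁y * v₁x + (k * χ₁x + 1) * v₁y = 0)
    (e2u : u₀x = u₁x) (e2v : v₀x = v₁x) (e2χ : χ₀x = χ₁x) (e2η : η₀x = η₁x)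
    (e3 : h₀ * u₀x + v₀y - h₀ * ω₀ * η₀x = 0)
    (e4 : h₀ * (k * χ₀x + 1) - k * η₀y = 0) :
    h₀ * ω₀ * η₀x * η₁y - h₀ * χ₁y * v₀x - h₀ * η₀x * u₁y + η₀y * v₁y - η₁y * v₀y = 0 := by
  subst e2u e2v e2χ e2η
  have h : k * (h₀ * ω₀ * η₀x * η₁y - h₀ * χ₁y * v₀x - h₀ * η₀x * u₁y + η₀y * v₁y - η₁y * v₀y) = 0 := by
    linear_combination h₀ * e1 - k * η₁y * e3 - v₁y * e4
  rcases mul_eq_zero.mp h with h' | h'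
  · exact absurd h' hk
  · exact h'
end
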